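/- Local monotonicity of the product drift operator. Let (V₁, H₁, i₁) and (V₂, H₂, i₂) be Gelfand triples, let α ∈ (1,∞), β ∈ [0,∞), γ > 0, C₀ > 0, L > 0, ε > 0, and let A : V₁ → V₁*, F : H₁ × H₂ → H₁, B : H₁ × V₂ → V₂* satisfy for all u, v ∈ V₁, x₁, x₂ ∈ H₁, y₁, y₂ ∈ H₂ and w, z ∈ V₂: (i) 2⟨A(u) - A(v), u - v⟩ ≤ ρ(v) ‖i₁(u - v)‖²_{H₁} where ρ : V₁ → [0,∞) satisfies ρ(v) ≤ C₀(1 + ‖v‖^α_{V₁})(1 + ‖i₁ v‖^β_{H₁}); (ii) ‖F(x₁,y₁) - F(x₂,y₂)‖_{H₁} ≤ L(‖x₁ - x₂‖_{H₁} + ‖y₁ - y₂‖_{H₂}); (iii) 2⟨B(x₁,w) - B(x₁,z), w - z⟩ ≤ -γ ‖i₂(w - z)‖²_{H₂}; (iv) ⟨B(x₁,w) - B(x₂,w), z⟩ ≤ C₀ ‖x₁ - x₂‖_{H₁} ‖i₂ z‖_{H₂}. Then there exists a constant C > 0 (depending on ε, γ, C₀, L) such that for all w₁ = (u₁, z₁),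 w₂ = (u₂, z₂) ∈ V₁ × V₂: 2⟨A(u₁) - A(u₂), u₁ - u₂⟩ + 2⟨F(i₁u₁, i₂z₁) - F(i₁u₂, i₂z₂), i₁(u₁ - u₂)⟩_{H₁} + (2/ε)⟨B(i₁u₁, z₁) - B(i₁u₂, z₂), z₁ - z₂⟩ ≤ C (1 + ‖w₂‖^α_{𝒱})(1 + ‖w₂‖^β_{ℋ}) ‖w₁ - w₂‖²_{ℋ}, where ‖(u,z)‖_{𝒱} = (‖u‖²_{V₁} + ‖z‖²_{V₂})^{1/2} and ‖(u,z)‖_{ℋ} = (‖i₁ u‖²_{H₁} + ‖i₂ z‖²_{H₂})^{1/2}. -/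

import Mathlib

private lemma aux_final (C₀ L ε KV KH S2 a2 : ℝ) (hC₀ : 0 < C₀) (hL : 0 < L) (hε : 0 < ε)
    (hKV0 : 0 ≤ KV) (hKH0 : 0 ≤ KH) (hK : 1 ≤ KV * KH)
    (haS : a2 ≤ S2) (hS2 : 0 ≤ S2) :
    C₀ * KV * KH * a2 + 3 * L * S2 + C₀ / ε * S2
      ≤ (C₀ + 3 * L + C₀ / ε) * KV * KH * S2 := by
  have t1 : 0 ≤ C₀ * KV * KH * (S2 - a2) := by
    apply mul_nonneg (by positivity); linarith
  have t2 : 0 ≤ 3 * L * S2 * (KV * KH - 1) := by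
    apply mul_nonneg (by positivity); linarith
  have t3 : 0 ≤ C₀ / ε * S2 * (KV * KH - 1) := by
    apply mul_nonneg (by positivity); linarith
  nlinarith [t1, t2, t3]

set_option maxHeartbeats 1600000 in
/-- Local monotonicity of the product (slow-fast) drift operator
`Ã(x,y) = (A(x) + F(x,y), (1/ε) B(x,y))` on the product Gelfand triple
`𝒱 = V₁ × V₂ ⊆ ℋ = H₁ × H₂ ⊆ 𝒱*` (Appendix proof of Theorem 2.2). -/
theorem product_drift_local_monotonicity
    {V₁ H₁ V₂ H₂ : Type*}
    [NormedAddCommGroup V₁] [NormedSpace ℝ V₁]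
    [NormedAddCommGroup H₁] [InnerProductSpace ℝ H₁] [CompleteSpace H₁]
    [TopologicalSpace.SeparableSpace H₁]
    [NormedAddCommGroup V₂] [NormedSpace ℝ V₂]
    [NormedAddCommGroup H₂] [InnerProductSpace ℝ H₂] [CompleteSpace H₂]
    [TopologicalSpace.SeparableSpace H₂]
    (i₁ : V₁ →L[ℝ] H₁) (hi₁inj : Function.Injective i₁) (hi₁dense : DenseRange i₁)
    (i₂ : V₂ →L[ℝ] H₂) (hi₂inj : Function.Injective i₂) (hi₂dense : DenseRange i₂)
    (α β γ C₀ L ε : ℝ) (hα : 1 < α) (hβ : 0 ≤ β) (hγ : 0 < γ) (hC₀ : 0 < C₀)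
    (hL : 0 < L) (hε : 0 < ε)
    (A : V₁ → (V₁ →L[ℝ] ℝ)) (F : H₁ → H₂ → H₁) (B : H₁ → V₂ → (V₂ →L[ℝ] ℝ))
    (ρ : V₁ → ℝ) (hρ0 : ∀ v, 0 ≤ ρ v)
    (hρbound : ∀ v : V₁, ρ v ≤ C₀ * (1 + ‖v‖ ^ α) * (1 + ‖i₁ v‖ ^ β))
    (hAmono : ∀ u v : V₁, 2 * (A u - A v) (u - v) ≤ ρ v * ‖i₁ (u - v)‖ ^ 2)
    (hF : ∀ (x₁ x₂ : H₁) (y₁ y₂ : H₂),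
      ‖F x₁ y₁ - F x₂ y₂‖ ≤ L * (‖x₁ - x₂‖ + ‖y₁ - y₂‖))
    (hBmono : ∀ (x : H₁) (w z : V₂),
      2 * (B x w - B x z) (w - z) ≤ -γ * ‖i₂ (w - z)‖ ^ 2)
    (hBlip : ∀ (x₁ x₂ : H₁) (w z : V₂),
      (B x₁ w - B x₂ w) z ≤ C₀ * ‖x₁ - x₂‖ * ‖i₂ z‖) :
    ∃ C > 0, ∀ (u₁ u₂ : V₁) (z₁ z₂ : V₂),
      2 * (A u₁ - A u₂) (u₁ - u₂)
        + 2 * (inner ℝ (F (i₁ u₁) (i₂ z₁) - F (i₁ u₂) (i₂ z₂)) (i₁ (u₁ - u₂)) : ℝ)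
        + (2 / ε) * (B (i₁ u₁) z₁ - B (i₁ u₂) z₂) (z₁ - z₂)
      ≤ C * (1 + Real.sqrt (‖u₂‖ ^ 2 + ‖z₂‖ ^ 2) ^ α)
          * (1 + Real.sqrt (‖i₁ u₂‖ ^ 2 + ‖i₂ z₂‖ ^ 2) ^ β)
          * Real.sqrt (‖i₁ (u₁ - u₂)‖ ^ 2 + ‖i₂ (z₁ - z₂)‖ ^ 2) ^ 2 := by
  refine ⟨C₀ + 3 * L + C₀ / ε, by positivity, ?_⟩
  intro u₁ u₂ z₁ z₂
  set a := ‖i₁ (u₁ - u₂)‖ with ha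
  set b := ‖i₂ (z₁ - z₂)‖ with hb
  have ha0 : 0 ≤ a := norm_nonneg _
  have hb0 : 0 ≤ b := norm_nonneg _
  have hS : Real.sqrt (‖i₁ (u₁ - u₂)‖ ^ 2 + ‖i₂ (z₁ - z₂)‖ ^ 2) ^ 2 = a ^ 2 + b ^ 2 :=
    Real.sq_sqrt (by positivity)
  rw [hS]
  set KV := 1 + Real.sqrt (‖u₂‖ ^ 2 + ‖z₂‖ ^ 2) ^ α with hKV
  set KH := 1 + Real.sqrt (‖i₁ u₂‖ ^ 2 + ‖i₂ z₂‖ ^ 2) ^ β with hKH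
  have hKV1 : (1 : ℝ) ≤ KV := by
    have := Real.rpow_nonneg (Real.sqrt_nonneg (‖u₂‖ ^ 2 + ‖z₂‖ ^ 2)) α
    simp only [hKV]; linarith
  have hKH1 : (1 : ℝ) ≤ KH := by
    have := Real.rpow_nonneg (Real.sqrt_nonneg (‖i₁ u₂‖ ^ 2 + ‖i₂ z₂‖ ^ 2)) β
    simp only [hKH]; linarith
  have hKV0 : (0 : ℝ) ≤ KV := by linarith
  have hKH0 : (0 : ℝ) ≤ KH := by linarith
  have hVle : ‖u₂‖ ≤ Real.sqrt (‖u₂‖ ^ 2 + ‖z₂‖ ^ 2) := by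
    have h := Real.sqrt_le_sqrt (show ‖u₂‖ ^ 2 ≤ ‖u₂‖ ^ 2 + ‖z₂‖ ^ 2 by
      have := sq_nonneg ‖z₂‖; linarith)
    rwa [Real.sqrt_sq (norm_nonneg _)] at h
  have hHle : ‖i₁ u₂‖ ≤ Real.sqrt (‖i₁ u₂‖ ^ 2 + ‖i₂ z₂‖ ^ 2) := by
    have h := Real.sqrt_le_sqrt (show ‖i₁ u₂‖ ^ 2 ≤ ‖i₁ u₂‖ ^ 2 + ‖i₂ z₂‖ ^ 2 by
      have := sq_nonneg ‖i₂ z₂‖; linarith)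
    rwa [Real.sqrt_sq (norm_nonneg _)] at h
  have hxV : (1 : ℝ) + ‖u₂‖ ^ α ≤ KV := by
    have := Real.rpow_le_rpow (norm_nonneg u₂) hVle (by linarith : (0:ℝ) ≤ α)
    simp only [hKV]; linarith
  have hxH : (1 : ℝ) + ‖i₁ u₂‖ ^ β ≤ KH := by
    have := Real.rpow_le_rpow (norm_nonneg _) hHle hβ
    simp only [hKH]; linarith
  have hyH0 : (0 : ℝ) ≤ 1 + ‖i₁ u₂‖ ^ β := by
    have := Real.rpow_nonneg (norm_nonneg (i₁ u₂)) β; linarith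
  have hρ2 : ρ u₂ ≤ C₀ * KV * KH := by
    refine (hρbound u₂).trans ?_
    calc C₀ * (1 + ‖u₂‖ ^ α) * (1 + ‖i₁ u₂‖ ^ β)
        ≤ C₀ * KV * (1 + ‖i₁ u₂‖ ^ β) :=
          mul_le_mul_of_nonneg_right (mul_le_mul_of_nonneg_left hxV hC₀.le) hyH0
      _ ≤ C₀ * KV * KH :=
          mul_le_mul_of_nonneg_left hxH (mul_nonneg hC₀.le hKV0)
  -- Term 1
  have h1 : 2 * (A u₁ - A u₂) (u₁ - u₂) ≤ C₀ * KV * KH * a ^ 2 :=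
    (hAmono u₁ u₂).trans (mul_le_mul_of_nonneg_right hρ2 (by positivity))
  -- Term 2
  have h2 : 2 * (inner ℝ (F (i₁ u₁) (i₂ z₁) - F (i₁ u₂) (i₂ z₂)) (i₁ (u₁ - u₂)) : ℝ)
      ≤ 3 * L * (a ^ 2 + b ^ 2) := by
    have hin := real_inner_le_norm (F (i₁ u₁) (i₂ z₁) - F (i₁ u₂) (i₂ z₂)) (i₁ (u₁ - u₂))
    have hFn : ‖F (i₁ u₁) (i₂ z₁) - F (i₁ u₂) (i₂ z₂)‖ ≤ L * (a + b) := by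
      have := hF (i₁ u₁) (i₁ u₂) (i₂ z₁) (i₂ z₂)
      rwa [← map_sub, ← map_sub] at this
    have hmul : ‖F (i₁ u₁) (i₂ z₁) - F (i₁ u₂) (i₂ z₂)‖ * ‖i₁ (u₁ - u₂)‖
        ≤ L * (a + b) * a := mul_le_mul_of_nonneg_right hFn ha0
    have hab : 2 * (L * (a + b) * a) ≤ 3 * L * (a ^ 2 + b ^ 2) := by
      nlinarith [sq_nonneg (a - b), hL.le, mul_nonneg hL.le (sq_nonneg (a - b))]
    linarith
  -- Term 3
  have h3 : (2 / ε) * (B (i₁ u₁) z₁ - B (i₁ u₂) z₂) (z₁ - z₂)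
      ≤ (C₀ / ε) * (a ^ 2 + b ^ 2) := by
    have hsplit : (B (i₁ u₁) z₁ - B (i₁ u₂) z₂) (z₁ - z₂)
        = (B (i₁ u₁) z₁ - B (i₁ u₁) z₂) (z₁ - z₂)
          + (B (i₁ u₁) z₂ - B (i₁ u₂) z₂) (z₁ - z₂) := by
      simp only [ContinuousLinearMap.sub_apply]; ring
    have hm : 2 * (B (i₁ u₁) z₁ - B (i₁ u₁) z₂) (z₁ - z₂) ≤ -γ * b ^ 2 :=
      hBmono (i₁ u₁) z₁ z₂
    have hl : (B (i₁ u₁) z₂ - B (i₁ u₂) z₂) (z₁ - z₂) ≤ C₀ * a * b := by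
      have h := hBlip (i₁ u₁) (i₁ u₂) z₂ (z₁ - z₂)
      rwa [← map_sub] at h
    have h2ab : 2 * (C₀ * a * b) ≤ C₀ * (a ^ 2 + b ^ 2) := by
      nlinarith [mul_nonneg hC₀.le (sq_nonneg (a - b))]
    have hb2 : -γ * b ^ 2 ≤ 0 := by nlinarith [mul_nonneg hγ.le (sq_nonneg b)]
    have key : 2 * (B (i₁ u₁) z₁ - B (i₁ u₂) z₂) (z₁ - z₂) ≤ C₀ * (a ^ 2 + b ^ 2) := by
      rw [hsplit]
      linarith
    have hεinv : (0 : ℝ) ≤ 1 / ε := by positivity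
    calc (2 / ε) * (B (i₁ u₁) z₁ - B (i₁ u₂) z₂) (z₁ - z₂)
        = (1 / ε) * (2 * (B (i₁ u₁) z₁ - B (i₁ u₂) z₂) (z₁ - z₂)) := by ring
      _ ≤ (1 / ε) * (C₀ * (a ^ 2 + b ^ 2)) := mul_le_mul_of_nonneg_left key hεinv
      _ = (C₀ / ε) * (a ^ 2 + b ^ 2) := by ring
  have hS2 : (0 : ℝ) ≤ a ^ 2 + b ^ 2 := by positivity
  have ha2 : a ^ 2 ≤ a ^ 2 + b ^ 2 := by nlinarith [sq_nonneg b]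
  have hK : (1 : ℝ) ≤ KV * KH := one_le_mul_of_one_le_of_one_le hKV1 hKH1
  have e1 : C₀ * KV * KH * a ^ 2 ≤ C₀ * KV * KH * (a ^ 2 + b ^ 2) :=
    mul_le_mul_of_nonneg_left ha2 (by positivity)
  have e2 : 3 * L * (a ^ 2 + b ^ 2) ≤ 3 * L * (a ^ 2 + b ^ 2) * (KV * KH) := by
    nth_rewrite 1 [← mul_one (3 * L * (a ^ 2 + b ^ 2))]
    exact mul_le_mul_of_nonneg_left hK (by positivity)
  have e3 : (C₀ / ε) * (a ^ 2 + b ^ 2) ≤ (C₀ / ε) * (a ^ 2 + b ^ 2) * (KV * KH) := by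
    nth_rewrite 1 [← mul_one ((C₀ / ε) * (a ^ 2 + b ^ 2))]
    exact mul_le_mul_of_nonneg_left hK (by positivity)
  have hsum := add_le_add (add_le_add h1 h2) h3
  exact hsum.trans (aux_final C₀ L ε KV KH (a ^ 2 + b ^ 2) (a ^ 2) hC₀ hL hε
    hKV0 hKH0 hK ha2 hS2)
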